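/- As the fragility number grows, golden games become fragile with probability tending to one: lim_{d→∞} ξ_d = 0, and consequently lim_{d→∞} (1 − φ·ξ_d − φ²·ξ_d²) = 1, i.e. the asymptotic probability of d-fragility of a golden game tends to 1 as d → ∞. -/
import Mathlib


open Filter Topology

/-- The golden ratio `φ = (√5 − 1)/2`. -/
noncomputable def phi : ℝ := (Real.sqrt 5 - 1) / 2

/-- `H(d)` computed from the values of `ξ` at arguments `< d` (given by `f`):
`H(1) = 1` and, for `d ≥ 2`,
`H(d) = 1 − Σ_{r+s=d, r,s≥1} (1−ξ_r²)(1−ξ_s²) + Σ_{r+s=d−1, r,s≥1} (1−ξ_r²)(1−ξ_s²)`. -/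
noncomputable def Hof (f : ℕ → ℝ) (d : ℕ) : ℝ :=
  if d ≤ 1 then 1
  else
    1 - (∑ r ∈ Finset.Ioo 0 d, (1 - f r ^ 2) * (1 - f (d - r) ^ 2))
      + (∑ r ∈ Finset.Ioo 0 (d - 1), (1 - f r ^ 2) * (1 - f (d - 1 - r) ^ 2))

/-- `ξ_d = (1 − √(1 − 8φ⁵·H(d)))/(4φ²)`, the smaller root of the quadratic
`φ³·H(d) − x + 2φ²·x²`, defined by strong recursion simultaneously with `H`. -/
noncomputable def xi : ℕ → ℝ
  | d =>
      (1 - Real.sqrt (1 - 8 * phi ^ 5 * Hof (fun r => if _ : r < d then xi r else 0) d)) /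
        (4 * phi ^ 2)
  termination_by d => d

/-- `H(d)` of the simultaneous recursion defining `ξ`. -/
noncomputable def Hrec (d : ℕ) : ℝ := Hof xi d


lemma Hof_congr {f g : ℕ → ℝ} {d : ℕ} (h : ∀ r < d, f r = g r) : Hof f d = Hof g d := by
  unfold Hof
  split
  · rfl
  · rename_i hd
    push_neg at hd
    congr 1
    · congr 1
      apply Finset.sum_congr rfl
      intro r hr
      simp only [Finset.mem_Ioo] at hr
      rw [h r hr.2, h (d - r) (by omega)]
    · apply Finset.sum_congr rfl
      intro r hr
      simp only [Finset.mem_Ioo] at hr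
      rw [h r (by omega), h (d - 1 - r) (by omega)]

lemma xi_eq (d : ℕ) :
    xi d = (1 - Real.sqrt (1 - 8 * phi ^ 5 * Hrec d)) / (4 * phi ^ 2) := by
  rw [xi]
  have h : Hof (fun r => if _ : r < d then xi r else 0) d = Hrec d := by
    unfold Hrec
    apply Hof_congr
    intro r hr
    simp [hr]
  rw [h]

lemma sum_reflect (f : ℕ → ℝ) (n : ℕ) :
    ∑ r ∈ Finset.Ioo 0 n, f (n - r) = ∑ r ∈ Finset.Ioo 0 n, f r := by
  apply Finset.sum_nbij' (fun r => n - r) (fun r => n - r)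
  · intro a ha; simp only [Finset.mem_Ioo] at *; omega
  · intro a ha; simp only [Finset.mem_Ioo] at *; omega
  · intro a ha; simp only [Finset.mem_Ioo] at ha; omega
  · intro a ha; simp only [Finset.mem_Ioo] at ha; omega
  · intro a ha; rfl

lemma expand_sum (n : ℕ) (hn : 1 ≤ n) :
    ∑ r ∈ Finset.Ioo 0 n, (1 - xi r ^ 2) * (1 - xi (n - r) ^ 2)
      = (n - 1 : ℝ) - 2 * (∑ r ∈ Finset.Ioo 0 n, xi r ^ 2)
        + ∑ r ∈ Finset.Ioo 0 n, xi r ^ 2 * xi (n - r) ^ 2 := by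
  have h1 : ∑ r ∈ Finset.Ioo 0 n, (1 - xi r ^ 2) * (1 - xi (n - r) ^ 2)
      = ∑ r ∈ Finset.Ioo 0 n, ((1 : ℝ) - xi r ^ 2 - xi (n - r) ^ 2 + xi r ^ 2 * xi (n - r) ^ 2) := by
    apply Finset.sum_congr rfl; intro r _; ring
  rw [h1]
  rw [Finset.sum_add_distrib, Finset.sum_sub_distrib, Finset.sum_sub_distrib]
  rw [Finset.sum_const, Nat.card_Ioo, sum_reflect (fun r => xi r ^ 2) n]
  simp only [Nat.sub_zero, nsmul_eq_mul, mul_one, Nat.cast_sub hn, Nat.cast_one]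
  ring

lemma Hrec_formula (m : ℕ) :
    Hrec (m + 2) = 2 * xi (m + 1) ^ 2
      + (∑ r ∈ Finset.Ioo 0 (m + 1), xi r ^ 2 * xi (m + 1 - r) ^ 2)
      - ∑ r ∈ Finset.Ioo 0 (m + 2), xi r ^ 2 * xi (m + 2 - r) ^ 2 := by
  unfold Hrec Hof
  rw [if_neg (by omega)]
  have e1 : m + 2 - 1 = m + 1 := by omega
  rw [e1, expand_sum (m + 2) (by omega), expand_sum (m + 1) (by omega)]
  have e2 : ∑ r ∈ Finset.Ioo 0 (m + 2), xi r ^ 2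
      = (∑ r ∈ Finset.Ioo 0 (m + 1), xi r ^ 2) + xi (m + 1) ^ 2 := by
    have : Finset.Ioo 0 (m + 2) = insert (m + 1) (Finset.Ioo 0 (m + 1)) := by
      ext a; simp only [Finset.mem_Ioo, Finset.mem_insert]; omega
    rw [this, Finset.sum_insert (by simp)]
    ring
  rw [e2]
  push_cast
  ring

lemma hs2 : Real.sqrt 5 ^ 2 = 5 := Real.sq_sqrt (by norm_num)
lemma hslo : (2.236 : ℝ) < Real.sqrt 5 := by
  nlinarith [hs2, Real.sqrt_nonneg 5]
lemma hshi : Real.sqrt 5 < 2.2361 := by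
  nlinarith [hs2, Real.sqrt_nonneg 5]
lemma hphi : phi = (Real.sqrt 5 - 1) / 2 := rfl
lemma phi_pos : 0 < phi := by rw [hphi]; nlinarith [hslo]
lemma hphi2 : 4 * phi ^ 2 = 6 - 2 * Real.sqrt 5 := by
  rw [hphi]; linear_combination hs2
lemma phi2_pos : 0 < 4 * phi ^ 2 := by rw [hphi2]; nlinarith [hshi]
lemma hphi3 : phi ^ 3 = Real.sqrt 5 - 2 := by
  rw [hphi]; linear_combination ((Real.sqrt 5 - 3) / 8) * hs2
lemma hphi5 : phi ^ 5 = (5 * Real.sqrt 5 - 11) / 2 := by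
  rw [hphi]
  linear_combination ((Real.sqrt 5 ^ 3 - 5 * Real.sqrt 5 ^ 2 + 15 * Real.sqrt 5 - 35) / 32) * hs2
lemma phi5_pos : 0 < 8 * phi ^ 5 := by rw [hphi5]; nlinarith [hslo]

lemma abs_one_sub_sqrt_le (u : ℝ) : |1 - Real.sqrt u| ≤ |1 - u| := by
  rcases le_or_gt 0 u with h | h
  · have hsq := Real.sq_sqrt h
    have h1 : (0:ℝ) ≤ Real.sqrt u := Real.sqrt_nonneg u
    have key : (1 - Real.sqrt u) * (1 + Real.sqrt u) = 1 - u := by nlinarith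
    calc |1 - Real.sqrt u| ≤ |1 - Real.sqrt u| * (1 + Real.sqrt u) := by
          nlinarith [abs_nonneg (1 - Real.sqrt u)]
      _ = |(1 - Real.sqrt u) * (1 + Real.sqrt u)| := by
          rw [abs_mul, abs_of_nonneg (by linarith : (0:ℝ) ≤ 1 + Real.sqrt u)]
      _ = |1 - u| := by rw [key]
  · rw [Real.sqrt_eq_zero_of_nonpos h.le]
    rw [abs_of_nonneg (by norm_num : (0:ℝ) ≤ 1 - 0), abs_of_nonneg (by linarith)]
    linarith

lemma xi_abs_le (d : ℕ) : |xi d| ≤ 2 * phi ^ 3 * |Hrec d| := by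
  rw [xi_eq, abs_div, abs_of_pos phi2_pos, div_le_iff₀ phi2_pos]
  calc |1 - Real.sqrt (1 - 8 * phi ^ 5 * Hrec d)|
      ≤ |1 - (1 - 8 * phi ^ 5 * Hrec d)| := abs_one_sub_sqrt_le _
    _ = 8 * phi ^ 5 * |Hrec d| := by
        rw [show (1:ℝ) - (1 - 8 * phi ^ 5 * Hrec d) = 8 * phi ^ 5 * Hrec d by ring,
          abs_mul, abs_of_pos phi5_pos]
    _ ≤ 2 * phi ^ 3 * |Hrec d| * (4 * phi ^ 2) := by
        have : 8 * phi ^ 5 = 2 * phi ^ 3 * (4 * phi ^ 2) := by ring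
        rw [this]; nlinarith [abs_nonneg (Hrec d)]

lemma Hrec_le_one (d : ℕ) (h : d ≤ 1) : Hrec d = 1 := by
  unfold Hrec Hof; rw [if_pos h]

lemma gbound (m : ℕ) : (2/3 : ℝ) ^ m * (19/9 + 13 * (m : ℝ) / 36) ≤ 19/9 := by
  induction m with
  | zero => norm_num
  | succ n ih =>
    have h2 : (0:ℝ) ≤ (2/3 : ℝ) ^ n := by positivity
    have h3 : (2/3 : ℝ) ^ n ≤ 1 := pow_le_one₀ (by norm_num) (by norm_num)
    have hn : (0:ℝ) ≤ (n : ℝ) := Nat.cast_nonneg n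
    push_cast
    rw [pow_succ]
    nlinarith [ih]

lemma xi_sq_bound (r : ℕ) (h : |xi r| ≤ (1/2) * (2/3 : ℝ) ^ r) :
    xi r ^ 2 ≤ (1/4) * (4/9 : ℝ) ^ r := by
  have e : xi r ^ 2 = |xi r| ^ 2 := (sq_abs _).symm
  rw [e]
  calc |xi r| ^ 2 ≤ ((1/2) * (2/3 : ℝ) ^ r) ^ 2 := by
        apply pow_le_pow_left₀ (abs_nonneg _) h
    _ = (1/4) * (4/9 : ℝ) ^ r := by
        rw [mul_pow, ← pow_mul, show (4/9 : ℝ) = (2/3)^2 by norm_num, ← pow_mul]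
        norm_num [mul_comm]

lemma Qbound (n : ℕ) (hn : 1 ≤ n)
    (h : ∀ r < n, |xi r| ≤ (1/2) * (2/3 : ℝ) ^ r) :
    ∑ r ∈ Finset.Ioo 0 n, xi r ^ 2 * xi (n - r) ^ 2
      ≤ ((n : ℝ) - 1) * ((1/16) * (4/9 : ℝ) ^ n) := by
  have key : ∀ r ∈ Finset.Ioo 0 n, xi r ^ 2 * xi (n - r) ^ 2 ≤ (1/16) * (4/9 : ℝ) ^ n := by
    intro r hr
    simp only [Finset.mem_Ioo] at hr
    have h1 := h r hr.2
    have h2 := h (n - r) (by omega)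
    have e1 : xi r ^ 2 ≤ (1/4) * (4/9 : ℝ) ^ r := by
      have : xi r ^ 2 = |xi r| ^ 2 := (sq_abs _).symm
      rw [this]
      calc |xi r| ^ 2 ≤ ((1/2) * (2/3 : ℝ) ^ r) ^ 2 := by
            apply pow_le_pow_left₀ (abs_nonneg _) h1
        _ = (1/4) * (4/9 : ℝ) ^ r := by
            rw [mul_pow, ← pow_mul, show (4/9 : ℝ) = (2/3)^2 by norm_num, ← pow_mul]
            norm_num [mul_comm]
    have e2 : xi (n - r) ^ 2 ≤ (1/4) * (4/9 : ℝ) ^ (n - r) := by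
      have : xi (n - r) ^ 2 = |xi (n - r)| ^ 2 := (sq_abs _).symm
      rw [this]
      calc |xi (n-r)| ^ 2 ≤ ((1/2) * (2/3 : ℝ) ^ (n-r)) ^ 2 := by
            apply pow_le_pow_left₀ (abs_nonneg _) h2
        _ = (1/4) * (4/9 : ℝ) ^ (n-r) := by
            rw [mul_pow, ← pow_mul, show (4/9 : ℝ) = (2/3)^2 by norm_num, ← pow_mul]
            norm_num [mul_comm]
    have e3 : (4/9 : ℝ) ^ r * (4/9 : ℝ) ^ (n - r) = (4/9 : ℝ) ^ n := by
      rw [← pow_add]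
      congr 1
      omega
    have p1 : (0:ℝ) ≤ xi r ^ 2 := sq_nonneg _
    have p2 : (0:ℝ) ≤ (1/4) * (4/9 : ℝ) ^ r := by positivity
    calc xi r ^ 2 * xi (n - r) ^ 2
        ≤ ((1/4) * (4/9 : ℝ) ^ r) * ((1/4) * (4/9 : ℝ) ^ (n - r)) := by
          apply mul_le_mul e1 e2 (sq_nonneg _) p2
      _ = (1/16) * (4/9 : ℝ) ^ n := by rw [show ((1:ℝ)/4) * (4/9:ℝ)^r * ((1/4) * (4/9:ℝ)^(n-r)) = (1/16) * ((4/9:ℝ)^r * (4/9:ℝ)^(n-r)) by ring, e3]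
  calc ∑ r ∈ Finset.Ioo 0 n, xi r ^ 2 * xi (n - r) ^ 2
      ≤ ∑ _r ∈ Finset.Ioo 0 n, (1/16) * (4/9 : ℝ) ^ n := Finset.sum_le_sum key
    _ = ((n : ℝ) - 1) * ((1/16) * (4/9 : ℝ) ^ n) := by
        rw [Finset.sum_const, Nat.card_Ioo, nsmul_eq_mul]
        congr 1
        simp only [Nat.sub_zero]
        rw [Nat.cast_sub hn, Nat.cast_one]

lemma xi_bound : ∀ d : ℕ, |xi d| ≤ (1/2) * (2/3 : ℝ) ^ d := by
  intro d
  induction d using Nat.strong_induction_on with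
  | _ d ih =>
    match d with
    | 0 =>
      have := xi_abs_le 0
      rw [Hrec_le_one 0 (by norm_num)] at this
      simp only [abs_one, mul_one, pow_zero] at this ⊢
      rw [hphi3] at this
      nlinarith [hshi]
    | 1 =>
      rw [xi_eq, Hrec_le_one 1 (by norm_num)]
      have hle : Real.sqrt (1 - 8 * phi ^ 5 * 1) ≤ 1 := by
        have : (1:ℝ) = Real.sqrt 1 := by simp
        rw [this]
        apply Real.sqrt_le_sqrt
        nlinarith [phi5_pos]
      have hge : 1 - 4 * phi ^ 2 / 3 ≤ Real.sqrt (1 - 8 * phi ^ 5 * 1) := by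
        apply Real.le_sqrt_of_sq_le
        rw [hphi2, hphi5]
        nlinarith [hshi, hs2]
      have hnum : 0 ≤ 1 - Real.sqrt (1 - 8 * phi ^ 5 * 1) := by linarith
      rw [abs_of_nonneg (div_nonneg hnum phi2_pos.le), div_le_iff₀ phi2_pos]
      nlinarith [hge]
    | (m + 2) =>
      have ihb : ∀ r, r < m + 2 → |xi r| ≤ (1/2) * (2/3 : ℝ) ^ r := fun r hr => ih r hr
      have hx1 : xi (m+1) ^ 2 ≤ (1/4) * (4/9 : ℝ) ^ (m+1) :=
        xi_sq_bound _ (ihb _ (by omega))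
      have hQ1 := Qbound (m+1) (by omega) (fun r hr => ihb r (by omega))
      have hQ2 := Qbound (m+2) (by omega) (fun r hr => ihb r hr)
      have hQ1n : 0 ≤ ∑ r ∈ Finset.Ioo 0 (m+1), xi r ^ 2 * xi (m+1-r) ^ 2 :=
        Finset.sum_nonneg fun r _ => mul_nonneg (sq_nonneg _) (sq_nonneg _)
      have hQ2n : 0 ≤ ∑ r ∈ Finset.Ioo 0 (m+2), xi r ^ 2 * xi (m+2-r) ^ 2 :=
        Finset.sum_nonneg fun r _ => mul_nonneg (sq_nonneg _) (sq_nonneg _)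
      have habsH : |Hrec (m+2)|
          ≤ 2 * xi (m+1) ^ 2 + (∑ r ∈ Finset.Ioo 0 (m+1), xi r ^ 2 * xi (m+1-r) ^ 2)
            + ∑ r ∈ Finset.Ioo 0 (m+2), xi r ^ 2 * xi (m+2-r) ^ 2 := by
        rw [Hrec_formula, abs_le]
        constructor
        · nlinarith [sq_nonneg (xi (m+1))]
        · nlinarith [sq_nonneg (xi (m+1))]
      have hHb : |Hrec (m+2)|
          ≤ 2 * ((1/4) * (4/9 : ℝ) ^ (m+1)) + ((m+1 : ℝ) - 1) * ((1/16) * (4/9 : ℝ) ^ (m+1))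
            + ((m+2 : ℝ) - 1) * ((1/16) * (4/9 : ℝ) ^ (m+2)) := by
        push_cast at hQ1 hQ2 ⊢
        linarith [habsH, hx1, hQ1, hQ2]
      have hxa := xi_abs_le (m+2)
      have hphi3n : 0 ≤ 2 * phi ^ 3 := by nlinarith [pow_pos phi_pos 3]
      have step : |xi (m+2)| ≤ 2 * phi ^ 3 *
          (2 * ((1/4) * (4/9 : ℝ) ^ (m+1)) + ((m+1 : ℝ) - 1) * ((1/16) * (4/9 : ℝ) ^ (m+1))
            + ((m+2 : ℝ) - 1) * ((1/16) * (4/9 : ℝ) ^ (m+2))) :=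
        le_trans hxa (mul_le_mul_of_nonneg_left hHb hphi3n)
      have e49 : (4/9 : ℝ) ^ m = (2/3 : ℝ) ^ m * (2/3 : ℝ) ^ m := by
        rw [show (4/9 : ℝ) = (2/3) * (2/3) by norm_num, mul_pow]
      have hg := gbound m
      set p : ℝ := (2/3 : ℝ) ^ m with hpdef
      have hp0 : 0 < p := by positivity
      have key : p * (p * (19/9 + 13 * (m : ℝ) / 36)) ≤ p * (19/9) :=
        mul_le_mul_of_nonneg_left hg hp0.le
      have hm : (0:ℝ) ≤ (m : ℝ) := Nat.cast_nonneg m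
      have e1 : (4/9 : ℝ) ^ (m+1) = (4/9) * (p * p) := by
        rw [pow_succ, e49]; ring
      have e2 : (4/9 : ℝ) ^ (m+2) = (16/81) * (p * p) := by
        rw [pow_succ, pow_succ, e49]; ring
      have e3 : (2/3 : ℝ) ^ (m+2) = (4/9) * p := by
        rw [pow_succ, pow_succ]; ring
      rw [e3]
      rw [e1, e2] at step
      rw [hphi3] at step
      nlinarith [step, key, hslo, hshi, hp0, hm, mul_pos hp0 hp0]


/-- `ξ_d → 0` as `d → ∞`, and consequently the asymptotic probability
`1 − φ·ξ_d − φ²·ξ_d²` of `d`-fragility of a golden game tends to `1`. -/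
theorem fragility_tendsto_one :
    Tendsto (fun d => xi d) atTop (𝓝 0) ∧
      Tendsto (fun d => 1 - phi * xi d - phi ^ 2 * (xi d) ^ 2) atTop (𝓝 1) := by
  have h0 : Tendsto (fun d : ℕ => (1/2) * (2/3 : ℝ) ^ d) atTop (𝓝 0) := by
    have := tendsto_pow_atTop_nhds_zero_of_lt_one (by norm_num : (0:ℝ) ≤ 2/3) (by norm_num)
    simpa using this.const_mul (1/2 : ℝ)
  have hx : Tendsto (fun d => xi d) atTop (𝓝 0) :=
    squeeze_zero_norm (fun n => by simpa [Real.norm_eq_abs] using xi_bound n) h0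
  refine ⟨hx, ?_⟩
  have h1 : Tendsto (fun d => 1 - phi * xi d - phi ^ 2 * (xi d) ^ 2) atTop
      (𝓝 (1 - phi * 0 - phi ^ 2 * 0 ^ 2)) := by
    exact (tendsto_const_nhds.sub (tendsto_const_nhds.mul hx)).sub
      (tendsto_const_nhds.mul (hx.pow 2))
  simpa using h1
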